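/- Let A be the quotient ring ℂ[X, Y, Z, T]/(X·Y - T·Z), let m ⊆ A be the maximal ideal generated by the residue classes of X, Y, Z, T, and let P ⊆ A be the ideal generated by the residue classes of Y and T. Then the ideal generated by the image of P in the localization A_m of A at m is not a principal ideal. -/

import Mathlib

open MvPolynomial

/-- The coordinate ring `A = ℂ[X, Y, Z, T] / (X·Y - T·Z)` of the quadric cone, where the
variables `X, Y, Z, T` are indexed by `0, 1, 2, 3 : Fin 4`. -/
@[reducible]
def QuadricCone : Type :=
  MvPolynomial (Fin 4) ℂ ⧸
    Ideal.span {(X 0 : MvPolynomial (Fin 4) ℂ) * X 1 - X 3 * X 2}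

/-- The ideal `P ⊆ A` generated by the residue classes of `Y` and `T`, cutting out the
plane `B = {y = t = 0}` inside the quadric cone `{xy = tz}`. -/
noncomputable def QuadricCone.P : Ideal QuadricCone :=
  Ideal.span
    {Ideal.Quotient.mk _ (X 1 : MvPolynomial (Fin 4) ℂ),
     Ideal.Quotient.mk _ (X 3 : MvPolynomial (Fin 4) ℂ)}

/-- The ideal `m ⊆ A` generated by the residue classes of `X, Y, Z, T` (the vertex of the
cone). -/
noncomputable def QuadricCone.m : Ideal QuadricCone :=
  Ideal.span
    {Ideal.Quotient.mk _ (X 0 : MvPolynomial (Fin 4) ℂ),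
     Ideal.Quotient.mk _ (X 1 : MvPolynomial (Fin 4) ℂ),
     Ideal.Quotient.mk _ (X 2 : MvPolynomial (Fin 4) ℂ),
     Ideal.Quotient.mk _ (X 3 : MvPolynomial (Fin 4) ℂ)}

noncomputable section Aux

open TrivSqZeroExt

abbrev Dcone : Type := TrivSqZeroExt ℂ (ℂ × ℂ)

def vD : Fin 4 → Dcone := ![0, inr (1, 0), 0, inr (0, 1)]

example : (aeval vD) ((X 0 : MvPolynomial (Fin 4) ℂ) * X 1 - X 3 * X 2) = 0 := by
  simp [vD]

def ψ : QuadricCone →+* Dcone :=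
  Ideal.Quotient.lift _ ((aeval vD).toRingHom) (by
    intro a ha
    rw [Ideal.mem_span_singleton] at ha
    obtain ⟨c, rfl⟩ := ha
    simp [vD])

def ε : QuadricCone →+* ℂ :=
  Ideal.Quotient.lift _ ((aeval (0 : Fin 4 → ℂ)).toRingHom) (by
    intro a ha
    rw [Ideal.mem_span_singleton] at ha
    obtain ⟨c, rfl⟩ := ha
    simp)

lemma fst_psi (x : QuadricCone) : (ψ x).fst = ε x := by
  obtain ⟨p, rfl⟩ := Ideal.Quotient.mk_surjective x
  show ((fstHom ℂ ℂ (ℂ × ℂ)).comp (aeval vD)) p = (aeval (0 : Fin 4 → ℂ)) p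
  rw [MvPolynomial.comp_aeval]
  rw [show (fun i => (fstHom ℂ ℂ (ℂ × ℂ)) (vD i)) = (0 : Fin 4 → ℂ) from
    funext fun i => by fin_cases i <;> simp [vD]]

lemma eps_surj : Function.Surjective ε := fun c =>
  ⟨Ideal.Quotient.mk _ (C c), by simp [ε]⟩

lemma m_eq_ker : QuadricCone.m = RingHom.ker ε := by
  apply le_antisymm
  · rw [QuadricCone.m, Ideal.span_le]
    rintro x hx
    simp only [Set.mem_insert_iff, Set.mem_singleton_iff] at hx
    rcases hx with rfl | rfl | rfl | rfl <;>
      simp [RingHom.mem_ker, ε]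
  · intro x hx
    obtain ⟨p, rfl⟩ := Ideal.Quotient.mk_surjective x
    rw [RingHom.mem_ker] at hx
    have hx' : (aeval (0 : Fin 4 → ℂ)) p = 0 := hx
    rw [aeval_zero] at hx'
    have hp : p ∈ Ideal.span (MvPolynomial.X '' (Set.univ : Set (Fin 4))) := by
      rw [mem_ideal_span_X_image]
      intro mo hmo
      by_contra hc
      push_neg at hc
      have : mo = 0 := Finsupp.ext fun i => hc i (Set.mem_univ i)
      rw [mem_support_iff, this] at hmo
      exact hmo (by simpa [constantCoeff_eq] using hx')
    have hsub : Ideal.span (MvPolynomial.X '' (Set.univ : Set (Fin 4))) ≤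
        Ideal.span {(X 0 : MvPolynomial (Fin 4) ℂ), X 1, X 2, X 3} := by
      rw [Ideal.span_le]
      rintro _ ⟨i, -, rfl⟩
      fin_cases i <;> apply Ideal.subset_span <;> simp
    have hp' := hsub hp
    rw [QuadricCone.m, show ({Ideal.Quotient.mk _ (X 0 : MvPolynomial (Fin 4) ℂ),
      Ideal.Quotient.mk _ (X 1 : MvPolynomial (Fin 4) ℂ),
      Ideal.Quotient.mk _ (X 2 : MvPolynomial (Fin 4) ℂ),
      Ideal.Quotient.mk _ (X 3 : MvPolynomial (Fin 4) ℂ)} : Set QuadricCone) =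
      (Ideal.Quotient.mk _) '' {(X 0 : MvPolynomial (Fin 4) ℂ), X 1, X 2, X 3} from by
        simp [Set.image_insert_eq]]
    rw [← Ideal.map_span]
    exact Ideal.mem_map_of_mem _ hp'

lemma m_max : QuadricCone.m.IsMaximal := by
  rw [m_eq_ker]
  exact RingHom.ker_isMaximal_of_surjective ε eps_surj

lemma psi_unit (s : (QuadricCone.m.primeCompl (hp := m_max.isPrime))) : IsUnit (ψ s) := by
  rw [isUnit_iff_isUnit_fst, fst_psi, isUnit_iff_ne_zero]
  intro h0
  apply s.2
  show (s : QuadricCone) ∈ QuadricCone.m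
  exact m_eq_ker.ge (RingHom.mem_ker.mpr h0)

lemma two_gen_not_principal (g : Dcone) :
    Ideal.span {(inr (1, 0) : Dcone), inr (0, 1)} ≠ Ideal.span {g} := by
  intro h
  have hg : g ∈ Ideal.span {(inr (1, 0) : Dcone), inr (0, 1)} := by
    rw [h]; exact Ideal.subset_span rfl
  have hker : Ideal.span {(inr (1, 0) : Dcone), inr (0, 1)} ≤
      RingHom.ker (fstHom ℂ ℂ (ℂ × ℂ)).toRingHom := by
    rw [Ideal.span_le]
    rintro x hx
    simp only [Set.mem_insert_iff, Set.mem_singleton_iff] at hx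
    rcases hx with rfl | rfl <;> simp [RingHom.mem_ker]
  have hfst : g.fst = 0 := hker hg
  have hg' : g = inr g.snd := by
    conv_lhs => rw [← inl_fst_add_inr_snd_eq g]
    rw [hfst, inl_zero, zero_add]
  have h1 : (inr ((1 : ℂ), (0 : ℂ)) : Dcone) ∈ Ideal.span {g} := by
    rw [← h]; exact Ideal.subset_span (by simp)
  have h2 : (inr ((0 : ℂ), (1 : ℂ)) : Dcone) ∈ Ideal.span {g} := by
    rw [← h]; exact Ideal.subset_span (by simp)
  obtain ⟨a, ha⟩ := Ideal.mem_span_singleton'.mp h1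
  obtain ⟨b, hb⟩ := Ideal.mem_span_singleton'.mp h2
  rw [hg'] at ha hb
  have ha' : a.fst • g.snd = ((1 : ℂ), (0 : ℂ)) := by
    have := congrArg TrivSqZeroExt.snd ha
    simpa [snd_mul] using this
  have hb' : b.fst • g.snd = ((0 : ℂ), (1 : ℂ)) := by
    have := congrArg TrivSqZeroExt.snd hb
    simpa [snd_mul] using this
  have h1' : a.fst * g.snd.1 = 1 := congrArg Prod.fst ha'
  have h2' : a.fst * g.snd.2 = 0 := congrArg Prod.snd ha'
  have h4' : b.fst * g.snd.2 = 1 := congrArg Prod.snd hb'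
  have hane : a.fst ≠ 0 := fun h => by simp [h] at h1'
  have : g.snd.2 = 0 := by
    rcases mul_eq_zero.mp h2' with h | h
    · exact absurd h hane
    · exact h
  rw [this, mul_zero] at h4'
  exact one_ne_zero h4'.symm

end Aux

open TrivSqZeroExt

set_option synthInstance.maxHeartbeats 1000000 in
set_option maxHeartbeats 1000000 in
/-- **The plane `B` is not a Cartier divisor (Section 3 of the paper).**
In `A = ℂ[X, Y, Z, T]/(X·Y - T·Z)`, the ideal `m = (X, Y, Z, T)` is maximal, and the ideal
generated by the image of `P = (Y, T)` in the localization `A_m` of `A` at `m` is not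
principal. -/
theorem quadricCone_plane_not_cartier_at_vertex :
    ∃ hm : QuadricCone.m.IsMaximal,
      ¬ (Ideal.map
          (algebraMap QuadricCone
            (Localization (@Ideal.primeCompl QuadricCone _ QuadricCone.m hm.isPrime)))
          QuadricCone.P).IsPrincipal := by
  refine ⟨m_max, ?_⟩
  intro hpr
  haveI := m_max.isPrime
  obtain ⟨f, hf⟩ := hpr.principal
  set L := Localization (QuadricCone.m.primeCompl) with hL
  let ψ' : L →+* Dcone := IsLocalization.lift (M := QuadricCone.m.primeCompl) (S := L)
    (g := ψ) psi_unit
  have hcomp : ψ'.comp (algebraMap QuadricCone L) = ψ :=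
    IsLocalization.lift_comp psi_unit
  have key : Ideal.map ψ' (Ideal.map (algebraMap QuadricCone L) QuadricCone.P)
      = Ideal.span {(inr (1, 0) : Dcone), inr (0, 1)} := by
    rw [Ideal.map_map, hcomp, QuadricCone.P, Ideal.map_span]
    congr 1
    rw [Set.image_insert_eq, Set.image_singleton]
    have e1 : ψ (Ideal.Quotient.mk _ (X 1 : MvPolynomial (Fin 4) ℂ)) = inr (1, 0) := by
      simp [ψ, vD]
    have e3 : ψ (Ideal.Quotient.mk _ (X 3 : MvPolynomial (Fin 4) ℂ)) = inr (0, 1) := by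
      simp [ψ, vD]
    rw [e1, e3]
  rw [hf, Ideal.submodule_span_eq, Ideal.map_span, Set.image_singleton] at key
  exact two_gen_not_principal _ key.symm
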